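/- Let (Ω, 𝔽, P) be a probability space, let B > 0, and let K₀ and (K_t)_{t∈ℕ} be random variables with values in [0, B] almost surely. Let p₁ > 0 > p₂ be real numbers, and let (N_t)_{t∈ℕ} and (N¹_t)_{t∈ℕ} be nonnegative random variables such that almost surely 0 ≤ N¹_t ≤ N_t and K_t = K₀ + p₁·N¹_t + p₂·(N_t − N¹_t), and such that N_t/t converges in probability to a constant P₀ > 0. Define n̄ := −p₂/(p₁ − p₂). Then for every ε > 0, lim_{t→∞} P(|N¹_t − n̄·N_t| > ε·N_t) = 0; i.e., the fraction N¹_t/N_t of plays of strategy {1} converges in probability to n̄. -/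

import Mathlib

open MeasureTheory Filter

/-- Convergence in probability of the fraction of plays of strategy 1 to the
zero-drift fraction `n̄ = −p₂/(p₁ − p₂)`: if the AC level
`K_t = K₀ + p₁N¹_t + p₂(N_t − N¹_t)` stays almost surely in `[0, B]` and
`N_t/t → P₀ > 0` in probability, then `P(|N¹_t − n̄·N_t| > ε·N_t) → 0`. -/
theorem strategy_fraction_convergence {Ω : Type*} [MeasurableSpace Ω]
    (P : Measure Ω) [IsProbabilityMeasure P]
    (B : ℝ) (hB : 0 < B)
    (K₀ : Ω → ℝ) (K : ℕ → Ω → ℝ)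
    (hK₀meas : Measurable K₀) (hKmeas : ∀ t, Measurable (K t))
    (hK₀ : ∀ᵐ ω ∂P, K₀ ω ∈ Set.Icc 0 B)
    (hK : ∀ t : ℕ, ∀ᵐ ω ∂P, K t ω ∈ Set.Icc 0 B)
    (p₁ p₂ : ℝ) (hp₁ : 0 < p₁) (hp₂ : p₂ < 0)
    (N N1 : ℕ → Ω → ℝ)
    (hNmeas : ∀ t, Measurable (N t)) (hN1meas : ∀ t, Measurable (N1 t))
    (hrel : ∀ t : ℕ, ∀ᵐ ω ∂P,
      0 ≤ N1 t ω ∧ N1 t ω ≤ N t ω ∧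
      K t ω = K₀ ω + p₁ * N1 t ω + p₂ * (N t ω - N1 t ω))
    (P₀ : ℝ) (hP₀ : 0 < P₀)
    (hconv : ∀ η > 0,
      Tendsto (fun t : ℕ => P {ω | |N t ω / (t : ℝ) - P₀| > η}) atTop (nhds 0)) :
    ∀ ε > 0,
      Tendsto
        (fun t : ℕ =>
          P {ω | |N1 t ω - (-p₂ / (p₁ - p₂)) * N t ω| > ε * N t ω})
        atTop (nhds 0) := by
  intro ε hε
  have hpp : 0 < p₁ - p₂ := by linarith
  set c : ℝ := B / (p₁ - p₂) with hc
  have hcpos : 0 < c := div_pos hB hpp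
  have key : ∀ t : ℕ, ∀ᵐ ω ∂P,
      |N1 t ω - (-p₂ / (p₁ - p₂)) * N t ω| ≤ c := by
    intro t
    filter_upwards [hK₀, hK t, hrel t] with ω h0 ht hr
    obtain ⟨h1, h2, h3⟩ := hr
    have heq : N1 t ω - (-p₂ / (p₁ - p₂)) * N t ω
        = (K t ω - K₀ ω) / (p₁ - p₂) := by
      field_simp
      linarith [h3]
    rw [heq, hc, abs_div, abs_of_pos hpp]
    gcongr
    rw [abs_le]
    obtain ⟨h0a, h0b⟩ := h0
    obtain ⟨hta, htb⟩ := ht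
    constructor <;> linarith
  obtain ⟨T, hT⟩ := exists_nat_ge (2 * c / (ε * P₀))
  have hsub : ∀ᶠ t in atTop,
      P {ω | |N1 t ω - (-p₂ / (p₁ - p₂)) * N t ω| > ε * N t ω}
        ≤ P {ω | |N t ω / (t : ℝ) - P₀| > P₀ / 4} := by
    filter_upwards [eventually_ge_atTop (max T 1)] with t htT
    have ht1 : (1 : ℕ) ≤ t := le_trans (le_max_right T 1) htT
    have htpos : (0 : ℝ) < (t : ℝ) := by exact_mod_cast ht1
    have htT' : (2 * c / (ε * P₀)) ≤ (t : ℝ) := by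
      refine hT.trans ?_
      exact_mod_cast le_trans (le_max_left T 1) htT
    apply measure_mono_ae
    filter_upwards [key t, hrel t] with ω hkey hr hω
    obtain ⟨h1, h2, _⟩ := hr
    have hNnn : 0 ≤ N t ω := le_trans h1 h2
    have hNlt : N t ω < c / ε := by
      have : ε * N t ω < c := lt_of_lt_of_le hω hkey
      rw [lt_div_iff₀ hε]
      linarith [this]
    have hhalf : N t ω / (t : ℝ) < P₀ / 2 := by
      rw [div_lt_iff₀ htpos]
      have h4 : 2 * c ≤ (t : ℝ) * (ε * P₀) :=
        (div_le_iff₀ (by positivity : (0:ℝ) < ε * P₀)).mp htT'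
      have h5 : c / ε ≤ P₀ / 2 * (t : ℝ) := by
        rw [div_le_iff₀ hε]
        nlinarith
      linarith
    have : N t ω / (t : ℝ) - P₀ < -(P₀ / 4) := by linarith
    exact lt_abs.mpr (Or.inr (by linarith))
  have h0le : ∀ᶠ t in atTop, (0 : ENNReal)
      ≤ P {ω | |N1 t ω - (-p₂ / (p₁ - p₂)) * N t ω| > ε * N t ω} :=
    Eventually.of_forall fun t => zero_le
  exact tendsto_of_tendsto_of_tendsto_of_le_of_le' tendsto_const_nhds
    (hconv (P₀ / 4) (by positivity)) h0le hsub
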